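/- (Proposition 2, weighted version.) Let D : Fin C → Fin C → ℝ≥0 satisfy cyclical monotonicity (∑_j D(j,j) ≤ ∑_j D(j,σ(j)) for all permutations σ), and let a : Fin C → ℝ with a_j > 0 and ∑_j a_j = 1. Then the diagonal coupling γ'(i,j) = a_i·[i=j] is optimal for the transport problem with both marginals equal to a: for every coupling Γ (Γ(i,j) ≥ 0, ∑_j Γ(i,j) = a_i, ∑_i Γ(i,j) = a_j), we have ∑_i a_i D(i,i) ≤ ∑_{i,j} Γ(i,j) D(i,j). -/

import Mathlib

namespace Stmt13Aux

variable {C : ℕ}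

/-- Cost of a walk given by a list of vertices. -/
def cost (c : Fin C → Fin C → ℝ) : List (Fin C) → ℝ
  | [] => 0
  | [_] => 0
  | x :: y :: t => c x y + cost c (y :: t)

lemma cost_cons_cons (c : Fin C → Fin C → ℝ) (x y : Fin C) (t : List (Fin C)) :
    cost c (x :: y :: t) = c x y + cost c (y :: t) := rfl

lemma cost_concat (c : Fin C → Fin C → ℝ) :
    ∀ (l : List (Fin C)) (hl : l ≠ []) (j : Fin C),
      cost c (l ++ [j]) = cost c l + c (l.getLast hl) j
  | [], hl, _ => absurd rfl hl
  | [x], _, j => by simp [cost]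
  | x :: y :: t, _, j => by
      have h := cost_concat c (y :: t) (List.cons_ne_nil _ _) j
      simp only [List.cons_append] at h ⊢
      rw [cost_cons_cons, cost_cons_cons, h,
        List.getLast_cons (List.cons_ne_nil _ _)]
      ring_nf

lemma cost_split (c : Fin C → Fin C → ℝ) (j : Fin C) (t : List (Fin C)) :
    ∀ p : List (Fin C), cost c (p ++ j :: t) = cost c (p ++ [j]) + cost c (j :: t)
  | [] => by simp [cost]
  | [x] => by simp [cost]
  | x :: y :: p => by
      have := cost_split c j t (y :: p)
      simp only [List.cons_append] at this ⊢
      rw [cost_cons_cons, this, cost_cons_cons]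
      ring

lemma cost_eq_sum (c : Fin C → Fin C → ℝ) (d : Fin C) :
    ∀ l : List (Fin C),
      cost c l = ∑ i ∈ Finset.range (l.length - 1), c (l.getD i d) (l.getD (i + 1) d)
  | [] => by simp [cost]
  | [x] => by simp [cost]
  | x :: y :: t => by
      have ih := cost_eq_sum c d (y :: t)
      rw [cost_cons_cons, ih]
      have hlen : (x :: y :: t).length - 1 = ((y :: t).length - 1) + 1 := by
        simp
      rw [hlen, Finset.sum_range_succ']
      simp [List.getD_cons_succ, List.getD_cons_zero]
      ring

lemma cycle_nonneg (c : Fin C → Fin C → ℝ) (hc0 : ∀ i, c i i = 0)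
    (hcyc : ∀ σ : Equiv.Perm (Fin C), 0 ≤ ∑ j, c j (σ j))
    (m : List (Fin C)) (hm : m ≠ []) (hnd : m.Nodup) :
    0 ≤ cost c m + c (m.getLast hm) (m.head hm) := by
  classical
  have h1 := hcyc m.formPerm
  set σ := m.formPerm with hσ
  have hlen : 0 < m.length := List.length_pos_iff.2 hm
  set d : Fin C := m.head hm with hd
  -- restrict the sum to the support
  have hsub : ∑ j, c j (σ j) = ∑ j ∈ m.toFinset, c j (σ j) := by
    rw [← Finset.sum_subset (Finset.subset_univ m.toFinset)]
    intro x _ hx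
    rw [hσ, List.formPerm_apply_of_notMem (by simpa using hx), hc0]
  have h2 : ∑ j ∈ m.toFinset, c j (σ j) = (m.map (fun x => c x (σ x))).sum :=
    List.sum_toFinset _ hnd
  set g : ℕ → ℝ := fun i => c (m.getD i d) (m.getD ((i + 1) % m.length) d) with hg
  have h3 : (m.map (fun x => c x (σ x))).sum = ∑ i ∈ Finset.range m.length, g i := by
    conv_lhs => rw [← List.ofFn_getElem (xs := m), List.map_ofFn, List.sum_ofFn]
    have hterm : ∀ i : Fin m.length,
        ((fun x => c x (σ x)) ∘ fun i : Fin m.length => m[(i : ℕ)]) i = g (i : ℕ) := by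
      intro i
      have happ := List.formPerm_apply_getElem m hnd i i.isLt
      rw [← hσ] at happ
      simp only [Function.comp, hg]
      rw [happ, List.getD_eq_getElem m d i.isLt,
        List.getD_eq_getElem m d (Nat.mod_lt _ hlen)]
    rw [Finset.sum_congr rfl fun i _ => hterm i]
    exact Fin.sum_univ_eq_sum_range g m.length
  obtain ⟨n, hn⟩ : ∃ n, m.length = n + 1 := ⟨m.length - 1, by omega⟩
  have h4 : ∑ i ∈ Finset.range m.length, g i
      = cost c m + c (m.getLast hm) (m.head hm) := by
    rw [hn, Finset.sum_range_succ]
    have hmain : ∑ i ∈ Finset.range n, g i = cost c m := by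
      rw [cost_eq_sum c d m]
      have : m.length - 1 = n := by omega
      rw [this]
      refine Finset.sum_congr rfl fun i hi => ?_
      have hi' : i < n := Finset.mem_range.1 hi
      have hmod : (i + 1) % m.length = i + 1 := Nat.mod_eq_of_lt (by omega)
      simp only [hg, hmod]
    have hgn : g n = c (m.getLast hm) (m.head hm) := by
      have hmod : (n + 1) % m.length = 0 := by rw [hn, Nat.mod_self]
      have hn' : n < m.length := by omega
      have hidx : m.length - 1 = n := by omega
      simp only [hg, hmod]
      rw [List.getD_eq_getElem m d hn', List.getD_eq_getElem m d hlen,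
        List.getLast_eq_getElem (l := m) hm, List.head_eq_getElem (l := m) hm]
      simp only [hidx]
    rw [hmain, hgn]
  rw [hsub, h2, h3, h4] at h1
  exact h1

lemma exists_potential (c : Fin C → Fin C → ℝ) (hc0 : ∀ i, c i i = 0)
    (hcyc : ∀ σ : Equiv.Perm (Fin C), 0 ≤ ∑ j, c j (σ j)) :
    ∃ φ : Fin C → ℝ, ∀ i j, φ j ≤ φ i + c i j := by
  classical
  have hfin : ∀ j : Fin C,
      {l : List (Fin C) | l.Nodup ∧ l ≠ [] ∧ l.getLast? = some j}.Finite := by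
    intro j
    apply (List.finite_length_le (Fin C) C).subset
    intro l hl
    have := hl.1.length_le_card
    simpa using this
  set T : Fin C → Finset ℝ := fun j => ((hfin j).toFinset.image (cost c)) with hT
  have hTne : ∀ j, (T j).Nonempty := by
    intro j
    refine ⟨cost c [j], Finset.mem_image.2 ⟨[j], ((hfin j).mem_toFinset).2 ?_, rfl⟩⟩
    exact ⟨List.nodup_singleton j, List.cons_ne_nil _ _, rfl⟩
  set φ : Fin C → ℝ := fun j => (T j).min' (hTne j) with hφ
  have hφle : ∀ (j : Fin C) (l' : List (Fin C)), l'.Nodup → l' ≠ [] →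
      l'.getLast? = some j → φ j ≤ cost c l' := by
    intro j l' h1 h2 h3
    exact Finset.min'_le _ _
      (Finset.mem_image.2 ⟨l', ((hfin j).mem_toFinset).2 ⟨h1, h2, h3⟩, rfl⟩)
  refine ⟨φ, fun i j => ?_⟩
  obtain ⟨l, hl, hcost⟩ := Finset.mem_image.1 ((T i).min'_mem (hTne i))
  rw [(hfin i).mem_toFinset] at hl
  obtain ⟨hnd, hne, hlast⟩ := hl
  have hil : l.getLast hne = i := by
    rw [List.getLast?_eq_getLast (l := l) hne] at hlast
    exact Option.some_injective _ hlast
  by_cases hj : j ∈ l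
  · obtain ⟨s, t, rfl⟩ := List.append_of_mem hj
    have hsubp : (s ++ [j]).Sublist (s ++ j :: t) :=
      (List.cons_sublist_cons.2 (List.nil_sublist t)).append_left s
    have hndp : (s ++ [j]).Nodup := hnd.sublist hsubp
    have hple : φ j ≤ cost c (s ++ [j]) :=
      hφle j _ hndp (by simp) (List.getLast?_concat (l := s))
    have hndc : (j :: t).Nodup := hnd.sublist (List.sublist_append_right s (j :: t))
    have hlastc : (j :: t).getLast (List.cons_ne_nil _ _) = i := by
      rw [← hil]
      rw [List.getLast_append_of_ne_nil (h₂ := List.cons_ne_nil _ _)]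
    have hcyc0 : 0 ≤ cost c (j :: t) + c i j := by
      have h := cycle_nonneg c hc0 hcyc (j :: t) (List.cons_ne_nil _ _) hndc
      rw [hlastc] at h
      simpa using h
    have hsplit : cost c (s ++ j :: t) = cost c (s ++ [j]) + cost c (j :: t) :=
      cost_split c j t s
    have hcost' : cost c (s ++ j :: t) = φ i := hcost
    linarith
  · have hnd' : (l ++ [j]).Nodup := by
      rw [List.nodup_append]
      exact ⟨hnd, List.nodup_singleton j, by simpa [List.disjoint_singleton] using (fun a ha h => hj (h ▸ ha) : ∀ a ∈ l, ¬a = j)⟩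
    have h := hφle j (l ++ [j]) hnd' (by simp) (List.getLast?_concat (l := l))
    rw [cost_concat c l hne j, hil] at h
    linarith [hcost]

end Stmt13Aux

/-- Proposition 2 (weighted version). -/
theorem stmt13 {C : ℕ} (hC : 0 < C) (D : Fin C → Fin C → ℝ)
    (hDnn : ∀ i j, 0 ≤ D i j)
    (hcyc : ∀ σ : Equiv.Perm (Fin C), ∑ j, D j j ≤ ∑ j, D j (σ j))
    (a : Fin C → ℝ) (ha : ∀ i, 0 < a i) (hasum : ∑ i, a i = 1)
    (Γ : Fin C → Fin C → ℝ) (hΓnn : ∀ i j, 0 ≤ Γ i j)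
    (hΓrow : ∀ i, ∑ j, Γ i j = a i) (hΓcol : ∀ j, ∑ i, Γ i j = a j) :
    ∑ i, a i * D i i ≤ ∑ i, ∑ j, Γ i j * D i j := by
  classical
  set c : Fin C → Fin C → ℝ := fun i j => D i j - D i i with hc
  have hc0 : ∀ i, c i i = 0 := fun i => by simp [hc]
  have hccyc : ∀ σ : Equiv.Perm (Fin C), 0 ≤ ∑ j, c j (σ j) := by
    intro σ
    have h := hcyc σ
    have : ∑ j, c j (σ j) = (∑ j, D j (σ j)) - ∑ j, D j j := by
      simp [hc, Finset.sum_sub_distrib]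
    linarith
  obtain ⟨φ, hφ⟩ := Stmt13Aux.exists_potential c hc0 hccyc
  have key : ∀ i j, Γ i j * (D i i + (φ j - φ i)) ≤ Γ i j * D i j := by
    intro i j
    have h := hφ i j
    simp only [hc] at h
    have : D i i + (φ j - φ i) ≤ D i j := by linarith
    exact mul_le_mul_of_nonneg_left this (hΓnn i j)
  have h1 : ∑ i, ∑ j, Γ i j * (D i i + (φ j - φ i)) ≤ ∑ i, ∑ j, Γ i j * D i j :=
    Finset.sum_le_sum fun i _ => Finset.sum_le_sum fun j _ => key i j
  have h2 : ∑ i, ∑ j, Γ i j * (D i i + (φ j - φ i)) = ∑ i, a i * D i i := by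
    have e1 : ∀ i : Fin C, ∑ j, Γ i j * (D i i + (φ j - φ i))
        = (∑ j, Γ i j * D i i) + (∑ j, Γ i j * φ j) - (∑ j, Γ i j * φ i) := by
      intro i
      rw [← Finset.sum_add_distrib, ← Finset.sum_sub_distrib]
      exact Finset.sum_congr rfl fun j _ => by ring
    rw [Finset.sum_congr rfl fun i _ => e1 i]
    have eA : ∑ i : Fin C, ∑ j, Γ i j * D i i = ∑ i, a i * D i i := by
      refine Finset.sum_congr rfl fun i _ => ?_
      rw [← Finset.sum_mul, hΓrow i]
    have eB : ∑ i : Fin C, ∑ j, Γ i j * φ j = ∑ i, a i * φ i := by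
      rw [Finset.sum_comm]
      refine Finset.sum_congr rfl fun j _ => ?_
      rw [← Finset.sum_mul, hΓcol j]
    have eC : ∑ i : Fin C, ∑ j, Γ i j * φ i = ∑ i, a i * φ i := by
      refine Finset.sum_congr rfl fun i _ => ?_
      rw [← Finset.sum_mul, hΓrow i]
    calc ∑ i : Fin C, ((∑ j, Γ i j * D i i) + (∑ j, Γ i j * φ j) - (∑ j, Γ i j * φ i))
        = (∑ i : Fin C, ∑ j, Γ i j * D i i) + (∑ i : Fin C, ∑ j, Γ i j * φ j)
          - (∑ i : Fin C, ∑ j, Γ i j * φ i) := by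
          rw [← Finset.sum_add_distrib, ← Finset.sum_sub_distrib]
      _ = ∑ i, a i * D i i := by rw [eA, eB, eC]; ring
  linarith
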